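/- In the counterexample construction with X₁ ~ U(0,1) independent of X₂ ~ U(−1,1), β = (1,1), ε = √(1+X₂²)·ξ with ξ independent of X and distribution function F_ξ equal to τ + ct on (−1,1] (0 < c < min{τ,1−τ}): for every s ≥ 0, P(Y=1 | X₁ = s) = ∫_{−1}^{1} F_ξ((1+u²)^{−1/2}(s+u)) du / 2 ≥ τ, where Y = 1{X₁ + X₂ ≥ ε}. In particular, the point b̃ = (1,0) satisfies sgn(X'b̃) = sgn(P(Y=1|X'b̃) − τ) almost surely (so b̃ ∈ Θ̄) even though P(X'b̃ > 0 and X'β < 0) > 0 (so b̃ ∉ Θ). -/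

import Mathlib

open MeasureTheory ProbabilityTheory Set
open scoped ENNReal

/-- The uniform probability measure on the interval `(a, b)`. -/
noncomputable def uniformOnIoo (a b : ℝ) : Measure ℝ :=
  (ENNReal.ofReal (b - a))⁻¹ • (volume.restrict (Ioo a b))

/-- Conditional expectation of `f` given the σ-algebra generated by the random element `X`. -/
noncomputable def condExpGiven {Ω 𝓧 : Type*} [MeasurableSpace Ω] [MeasurableSpace 𝓧]
    (μ : Measure Ω) (X : Ω → 𝓧) (f : Ω → ℝ) : Ω → ℝ :=
  μ[f | MeasurableSpace.comap X inferInstance]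

-- helpers
lemma odd_integral_zero (f : ℝ → ℝ) (hf : ∀ x, f (-x) = - f x) :
    (∫ x in (-1:ℝ)..1, f x) = 0 := by
  have h := intervalIntegral.integral_comp_neg (a := (-1:ℝ)) (b := 1) (f := f)
  simp only [hf, intervalIntegral.integral_neg, neg_neg] at h
  linarith

lemma sqrt_pos' (u : ℝ) : 0 < Real.sqrt (1 + u ^ 2) :=
  Real.sqrt_pos.2 (by positivity)

lemma abs_div_sqrt_lt (u : ℝ) : |u / Real.sqrt (1 + u ^ 2)| < 1 := by
  rw [abs_div, abs_of_pos (sqrt_pos' u), div_lt_one (sqrt_pos' u)]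
  have : |u| = Real.sqrt (u ^ 2) := (Real.sqrt_sq_eq_abs u).symm
  rw [this]
  exact Real.sqrt_lt_sqrt (by positivity) (by linarith)

lemma cont_h (Fξ : ℝ → ℝ) (hFcont : Continuous Fξ) :
    Continuous (fun p : ℝ × ℝ => Fξ ((p.1 + p.2) / Real.sqrt (1 + p.2 ^ 2))) := by
  apply hFcont.comp
  apply Continuous.div (by fun_prop) (by fun_prop)
  exact fun p => ne_of_gt (sqrt_pos' p.2)

lemma base_integral (Fξ : ℝ → ℝ) (τ c : ℝ) (hFcont : Continuous Fξ)
    (hFlin : ∀ t ∈ Ioc (-1:ℝ) 1, Fξ t = τ + c * t) :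
    (∫ u in (-1:ℝ)..1, Fξ (u / Real.sqrt (1 + u ^ 2))) = 2 * τ := by
  have harg : ∀ u : ℝ, u / Real.sqrt (1 + u ^ 2) ∈ Ioc (-1:ℝ) 1 := by
    intro u
    have := abs_div_sqrt_lt u
    rw [abs_lt] at this
    exact ⟨this.1, this.2.le⟩
  have heq : ∀ u : ℝ, Fξ (u / Real.sqrt (1 + u ^ 2)) = τ + c * (u / Real.sqrt (1 + u ^ 2)) :=
    fun u => hFlin _ (harg u)
  simp only [heq]
  have hodd : (∫ u in (-1:ℝ)..1, u / Real.sqrt (1 + u ^ 2)) = 0 := by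
    apply odd_integral_zero
    intro x
    rw [neg_sq, neg_div]
  have hci : IntervalIntegrable (fun u : ℝ => u / Real.sqrt (1 + u ^ 2)) volume (-1) 1 := by
    apply Continuous.intervalIntegrable
    apply Continuous.div (by fun_prop) (by fun_prop)
    exact fun u => ne_of_gt (sqrt_pos' u)
  rw [intervalIntegral.integral_add intervalIntegrable_const (hci.const_mul c),
    intervalIntegral.integral_const, intervalIntegral.integral_const_mul, hodd]
  simp only [smul_eq_mul, mul_zero, add_zero]
  ring

lemma contFsqrt (Fξ : ℝ → ℝ) (hFcont : Continuous Fξ) (s : ℝ) :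
    Continuous (fun u : ℝ => Fξ ((s + u) / Real.sqrt (1 + u ^ 2))) :=
  (cont_h Fξ hFcont).comp (by fun_prop : Continuous (fun u : ℝ => (s, u)))

lemma I_lower (Fξ : ℝ → ℝ) (τ c : ℝ) (hFcont : Continuous Fξ) (hFmono : StrictMono Fξ)
    (hFlin : ∀ t ∈ Ioc (-1:ℝ) 1, Fξ t = τ + c * t) (s : ℝ) (hs : 0 ≤ s) :
    (2 * τ ≤ ∫ u in (-1:ℝ)..1, Fξ ((s + u) / Real.sqrt (1 + u ^ 2))) ∧
    (0 < s → 2 * τ < ∫ u in (-1:ℝ)..1, Fξ ((s + u) / Real.sqrt (1 + u ^ 2))) := by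
  have hint : ∀ t : ℝ, IntervalIntegrable
      (fun u : ℝ => Fξ ((t + u) / Real.sqrt (1 + u ^ 2))) volume (-1) 1 :=
    fun t => (contFsqrt Fξ hFcont t).intervalIntegrable _ _
  have hbase : (∫ u in (-1:ℝ)..1, Fξ ((0 + u) / Real.sqrt (1 + u ^ 2))) = 2 * τ := by
    simp only [zero_add]
    exact base_integral Fξ τ c hFcont hFlin
  constructor
  · rw [← hbase]
    apply intervalIntegral.integral_mono_on (by norm_num) (hint 0) (hint s)
    intro u _
    exact hFmono.monotone ((div_le_div_iff_of_pos_right (sqrt_pos' u)).2 (by linarith))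
  · intro hspos
    have hposint : 0 < ∫ u in (-1:ℝ)..1,
        (Fξ ((s + u) / Real.sqrt (1 + u ^ 2)) - Fξ ((0 + u) / Real.sqrt (1 + u ^ 2))) := by
      apply intervalIntegral.intervalIntegral_pos_of_pos_on ((hint s).sub (hint 0))
      · intro u _
        have : (0 + u) / Real.sqrt (1 + u ^ 2) < (s + u) / Real.sqrt (1 + u ^ 2) :=
          (div_lt_div_iff_of_pos_right (sqrt_pos' u)).2 (by linarith)
        exact sub_pos.2 (hFmono this)
      · norm_num
    rw [intervalIntegral.integral_sub (hint s) (hint 0), hbase] at hposint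
    linarith


/-- In the counterexample with `X₁ ~ U(0,1) ⊥ X₂ ~ U(−1,1)`, `β = (1,1)`,
`ε = √(1+X₂²)·ξ`, `ξ ⊥ X` with cdf `F_ξ` equal to `τ + ct` on `(−1,1]`:
for every `s ≥ 0`, `P(Y=1|X₁=s) = ∫_{−1}^{1} F_ξ((1+u²)^{−1/2}(s+u)) du / 2 ≥ τ`.
In particular `b̃ = (1,0)` satisfies `sgn(X'b̃) = sgn(P(Y=1|X'b̃) − τ)` a.s. (so `b̃ ∈ Θ̄`)
even though `P(X'b̃ > 0 and X'β < 0) > 0` (so `b̃ ∉ Θ`). -/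
theorem counterexample_theta_bar_not_sharp {Ω : Type*} [MeasurableSpace Ω]
    (μ : Measure Ω) [IsProbabilityMeasure μ]
    (τ c : ℝ) (hτ : τ ∈ Ioo (0:ℝ) 1) (hc : c ∈ Ioo (0:ℝ) (min τ (1 - τ)))
    (X1 X2 ξ : Ω → ℝ) (hX1 : Measurable X1) (hX2 : Measurable X2) (hξ : Measurable ξ)
    (hlawX1 : μ.map X1 = uniformOnIoo 0 1)
    (hlawX2 : μ.map X2 = uniformOnIoo (-1) 1)
    (hindep12 : IndepFun X1 X2 μ)
    (hindepξ : IndepFun (fun ω => (X1 ω, X2 ω)) ξ μ)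
    -- F_ξ is the cdf of ξ: continuous, strictly increasing, equal to τ + ct on (−1,1]
    (Fξ : ℝ → ℝ)
    (hcdf : ∀ t, (μ {ω | ξ ω ≤ t}).toReal = Fξ t)
    (hFcont : Continuous Fξ) (hFmono : StrictMono Fξ)
    (hFlin : ∀ t ∈ Ioc (-1:ℝ) 1, Fξ t = τ + c * t)
    -- the binary outcome Y = 1{X₁ + X₂ ≥ ε} with ε = √(1+X₂²)·ξ
    (Y : Ω → ℝ)
    (hY : ∀ ω, Y ω =
      if Real.sqrt (1 + X2 ω ^ 2) * ξ ω ≤ X1 ω + X2 ω then 1 else 0) :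
    -- the integral formula for P(Y=1|X₁=s) and its lower bound
    (∀ s : ℝ, 0 ≤ s →
      (∫ u in (-1:ℝ)..1, Fξ ((s + u) / Real.sqrt (1 + u ^ 2))) / 2 ≥ τ) ∧
    (condExpGiven μ X1 Y =ᵐ[μ] fun ω =>
      (∫ u in (-1:ℝ)..1, Fξ ((X1 ω + u) / Real.sqrt (1 + u ^ 2))) / 2) ∧
    -- b̃ = (1,0) ∈ Θ̄: sgn(X'b̃) = sgn(P(Y=1|X'b̃) − τ) almost surely
    (∀ᵐ ω ∂μ,
      Real.sign (X1 ω) = Real.sign (condExpGiven μ X1 Y ω - τ)) ∧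
    -- b̃ ∉ Θ: X'b̃ > 0 while X'β < 0 with positive probability
    (0 < μ {ω | 0 < X1 ω ∧ X1 ω + X2 ω < 0}) := by
  -- notation
  set I : ℝ → ℝ := fun x => ∫ u in (-1:ℝ)..1, Fξ ((x + u) / Real.sqrt (1 + u ^ 2)) with hI
  have hIlow := fun s hs => I_lower Fξ τ c hFcont hFmono hFlin s hs
  -- conjunct 1
  have conj1 : ∀ s : ℝ, 0 ≤ s → I s / 2 ≥ τ := by
    intro s hs
    have := (hIlow s hs).1
    linarith
  have conj1' : ∀ s : ℝ, 0 < s → τ < I s / 2 := by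
    intro s hs
    have := (hIlow s hs.le).2 hs
    linarith
  -- basic facts
  have F0 : ∀ t, 0 ≤ Fξ t := fun t => (hcdf t) ▸ ENNReal.toReal_nonneg
  have F1 : ∀ t, Fξ t ≤ 1 := by
    intro t
    rw [← hcdf t]
    have h1 : (μ {ω | ξ ω ≤ t}) ≤ 1 := prob_le_one
    calc (μ {ω | ξ ω ≤ t}).toReal ≤ (1 : ℝ≥0∞).toReal :=
          ENNReal.toReal_mono (by norm_num) h1
    _ = 1 := by simp
  have hIcont : Continuous I := by
    apply intervalIntegral.continuous_parametric_intervalIntegral_of_continuous'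
      (f := fun x u => Fξ ((x + u) / Real.sqrt (1 + u ^ 2))) (μ := volume)
    exact cont_h Fξ hFcont
  -- measurability of Y and E
  have hEm : MeasurableSet {ω | Real.sqrt (1 + X2 ω ^ 2) * ξ ω ≤ X1 ω + X2 ω} := by
    apply measurableSet_le
    · exact (Real.continuous_sqrt.measurable.comp ((hX2.pow_const 2).const_add 1)).mul hξ
    · exact hX1.add hX2
  set E : Set Ω := {ω | Real.sqrt (1 + X2 ω ^ 2) * ξ ω ≤ X1 ω + X2 ω} with hE
  have hYeq : Y = E.indicator 1 := by
    funext ω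
    rw [hY ω, Set.indicator_apply, Pi.one_apply]
    rfl
  have hYm : Measurable Y := by
    rw [hYeq]
    exact measurable_const.indicator hEm
  have hYint : Integrable Y μ := by
    apply Integrable.mono' (integrable_const (1:ℝ)) hYm.aestronglyMeasurable
    filter_upwards with ω
    rw [hY ω]
    split <;> norm_num
  -- laws
  set ν1 := μ.map X1 with hν1
  set ν2 := μ.map X2 with hν2
  set νξ := μ.map ξ with hνξ
  have hν1prob : IsProbabilityMeasure ν1 := Measure.isProbabilityMeasure_map hX1.aemeasurable
  have hν2prob : IsProbabilityMeasure ν2 := Measure.isProbabilityMeasure_map hX2.aemeasurable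
  have hνξprob : IsProbabilityMeasure νξ := Measure.isProbabilityMeasure_map hξ.aemeasurable
  have hξIic : ∀ a : ℝ, νξ (Iic a) = ENNReal.ofReal (Fξ a) := by
    intro a
    rw [hνξ, Measure.map_apply hξ measurableSet_Iic]
    have : ξ ⁻¹' Iic a = {ω | ξ ω ≤ a} := rfl
    rw [this, ← hcdf a, ENNReal.ofReal_toReal (measure_ne_top μ _)]
  have hprod12 : μ.map (fun ω => (X1 ω, X2 ω)) = ν1.prod ν2 :=
    (indepFun_iff_map_prod_eq_prod_map_map hX1.aemeasurable hX2.aemeasurable).1 hindep12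
  have hJ : μ.map (fun ω => ((X1 ω, X2 ω), ξ ω)) = (ν1.prod ν2).prod νξ := by
    rw [← hprod12]
    exact (indepFun_iff_map_prod_eq_prod_map_map (hX1.prodMk hX2).aemeasurable
      hξ.aemeasurable).1 hindepξ
  -- the key set-integral identity
  have hkey : ∀ A : Set ℝ, MeasurableSet A →
      ∫ ω in X1 ⁻¹' A, I (X1 ω) / 2 ∂μ = ∫ ω in X1 ⁻¹' A, Y ω ∂μ := by
    intro A hA
    -- RHS as a measure
    have hRHS : ∫ ω in X1 ⁻¹' A, Y ω ∂μ = (μ (E ∩ X1 ⁻¹' A)).toReal := by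
      rw [hYeq, MeasureTheory.integral_indicator_one hEm,
        measureReal_def, Measure.restrict_apply hEm]
    -- B and preimage
    set B : Set ((ℝ × ℝ) × ℝ) :=
      {p | p.1.1 ∈ A ∧ Real.sqrt (1 + p.1.2 ^ 2) * p.2 ≤ p.1.1 + p.1.2} with hB
    have hBm : MeasurableSet B := by
      have hBeq : B = ((fun p : (ℝ × ℝ) × ℝ => p.1.1) ⁻¹' A) ∩
          {p : (ℝ × ℝ) × ℝ | Real.sqrt (1 + p.1.2 ^ 2) * p.2 ≤ p.1.1 + p.1.2} := by
        ext p
        simp [hB, mem_setOf_eq]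
      rw [hBeq]
      apply MeasurableSet.inter
      · exact (measurable_fst.comp measurable_fst) hA
      · apply measurableSet_le
        · exact (Real.continuous_sqrt.measurable.comp
            (((measurable_snd.comp measurable_fst).pow_const 2).const_add 1)).mul measurable_snd
        · exact (measurable_fst.comp measurable_fst).add (measurable_snd.comp measurable_fst)
    have hpre : E ∩ X1 ⁻¹' A = (fun ω => ((X1 ω, X2 ω), ξ ω)) ⁻¹' B := by
      ext ω
      simp only [hB, hE, mem_inter_iff, mem_setOf_eq, mem_preimage]
      tauto
    have hTm : Measurable (fun ω => ((X1 ω, X2 ω), ξ ω)) := (hX1.prodMk hX2).prodMk hξ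
    have hμB : μ (E ∩ X1 ⁻¹' A) = ((ν1.prod ν2).prod νξ) B := by
      rw [hpre, ← Measure.map_apply hTm hBm, hJ]
    -- slice measure
    have hslice : ∀ p : ℝ × ℝ, νξ {t | (p, t) ∈ B} =
        A.indicator (fun _ => (1:ℝ≥0∞)) p.1 *
          ENNReal.ofReal (Fξ ((p.1 + p.2) / Real.sqrt (1 + p.2 ^ 2))) := by
      intro p
      by_cases hp : p.1 ∈ A
      · have : {t | (p, t) ∈ B} = Iic ((p.1 + p.2) / Real.sqrt (1 + p.2 ^ 2)) := by
          ext t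
          simp only [hB, mem_setOf_eq, mem_Iic, hp, true_and]
          rw [le_div_iff₀ (sqrt_pos' p.2), mul_comm]
        rw [this, hξIic, Set.indicator_of_mem hp, one_mul]
      · have : {t | (p, t) ∈ B} = ∅ := by
          ext t
          simp [hB, hp]
        rw [this, measure_empty, Set.indicator_of_notMem hp, zero_mul]
    -- prod_apply
    have hmeasF : Measurable (fun p : ℝ × ℝ =>
        ENNReal.ofReal (Fξ ((p.1 + p.2) / Real.sqrt (1 + p.2 ^ 2)))) :=
      ENNReal.measurable_ofReal.comp (cont_h Fξ hFcont).measurable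
    have hprodB : ((ν1.prod ν2).prod νξ) B = ∫⁻ p, A.indicator (fun _ => (1:ℝ≥0∞)) p.1 *
        ENNReal.ofReal (Fξ ((p.1 + p.2) / Real.sqrt (1 + p.2 ^ 2))) ∂(ν1.prod ν2) := by
      rw [Measure.prod_apply hBm]
      exact lintegral_congr fun p => hslice p
    -- inner integral over ν2
    have hinner : ∀ x : ℝ, (∫⁻ u, ENNReal.ofReal (Fξ ((x + u) / Real.sqrt (1 + u ^ 2))) ∂ν2)
        = (ENNReal.ofReal 2)⁻¹ * ENNReal.ofReal (I x) := by
      intro x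
      rw [hlawX2]
      unfold uniformOnIoo
      rw [lintegral_smul_measure]
      congr 1
      · norm_num
      have hcont := contFsqrt Fξ hFcont x
      have hintOn : IntegrableOn (fun u => Fξ ((x + u) / Real.sqrt (1 + u ^ 2)))
          (Ioo (-1:ℝ) 1) volume :=
        (hcont.integrableOn_Icc).mono_set Ioo_subset_Icc_self
      rw [← MeasureTheory.ofReal_integral_eq_lintegral_ofReal hintOn
        (Filter.Eventually.of_forall fun u => F0 _)]
      have hIx : I x = ∫ u in Ioo (-1:ℝ) 1, Fξ ((x + u) / Real.sqrt (1 + u ^ 2)) := by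
        simp only [hI]
        rw [intervalIntegral.integral_of_le (by norm_num : (-1:ℝ) ≤ 1),
          MeasureTheory.integral_Ioc_eq_integral_Ioo]
      rw [hIx]
    -- Fubini
    have hlint : ((ν1.prod ν2).prod νξ) B = ∫⁻ x, A.indicator (fun _ => (1:ℝ≥0∞)) x *
        ((ENNReal.ofReal 2)⁻¹ * ENNReal.ofReal (I x)) ∂ν1 := by
      have hmeasProd : Measurable (fun p : ℝ × ℝ => A.indicator (fun _ => (1:ℝ≥0∞)) p.1 *
          ENNReal.ofReal (Fξ ((p.1 + p.2) / Real.sqrt (1 + p.2 ^ 2)))) :=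
        Measurable.mul ((measurable_const.indicator hA).comp measurable_fst) hmeasF
      rw [hprodB, MeasureTheory.lintegral_prod _ hmeasProd.aemeasurable]
      apply lintegral_congr
      intro x
      have hm1 : Measurable (fun u : ℝ =>
          ENNReal.ofReal (Fξ ((x + u) / Real.sqrt (1 + u ^ 2)))) :=
        ENNReal.measurable_ofReal.comp (contFsqrt Fξ hFcont x).measurable
      show (∫⁻ u, A.indicator (fun _ => (1:ℝ≥0∞)) x *
          ENNReal.ofReal (Fξ ((x + u) / Real.sqrt (1 + u ^ 2))) ∂ν2) = _
      rw [lintegral_const_mul _ hm1, hinner x]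
    -- LHS
    have hLHS : ∫ ω in X1 ⁻¹' A, I (X1 ω) / 2 ∂μ = ∫ x in A, I x / 2 ∂ν1 := by
      rw [hν1, MeasureTheory.setIntegral_map hA
        ((hIcont.div_const 2).aestronglyMeasurable) hX1.aemeasurable]
      
    have hLHS2 : ∫ x in A, I x / 2 ∂ν1 = (∫⁻ x in A, ENNReal.ofReal (I x / 2) ∂ν1).toReal := by
      rw [MeasureTheory.integral_eq_lintegral_of_nonneg_ae]
      · filter_upwards with x
        have h0 : 0 ≤ I x := by
          rw [hI]
          apply intervalIntegral.integral_nonneg (by norm_num)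
          intro u _
          exact F0 _
        positivity
      · exact (hIcont.div_const 2).aestronglyMeasurable
    have hlconv : ∫⁻ x in A, ENNReal.ofReal (I x / 2) ∂ν1 =
        ∫⁻ x, A.indicator (fun _ => (1:ℝ≥0∞)) x *
          ((ENNReal.ofReal 2)⁻¹ * ENNReal.ofReal (I x)) ∂ν1 := by
      rw [← lintegral_indicator hA]
      apply lintegral_congr
      intro x
      by_cases hx : x ∈ A
      · rw [Set.indicator_of_mem hx, Set.indicator_of_mem hx, one_mul,
          ENNReal.ofReal_div_of_pos (by norm_num : (0:ℝ) < 2), ENNReal.div_eq_inv_mul]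
      · rw [Set.indicator_of_notMem hx, Set.indicator_of_notMem hx, zero_mul]
    rw [hRHS, hμB, hlint, hLHS, hLHS2, hlconv]
  -- the condexp identity
  have hle : MeasurableSpace.comap X1 inferInstance ≤ (inferInstance : MeasurableSpace Ω) := by
    rintro s ⟨A, hA, rfl⟩
    exact hX1 hA
  have hX1m : Measurable[MeasurableSpace.comap X1 inferInstance] X1 :=
    fun s hs => ⟨s, hs, rfl⟩
  have hgm : Measurable[MeasurableSpace.comap X1 inferInstance]
      (fun ω => I (X1 ω) / 2) := ((hIcont.measurable).comp hX1m).div_const 2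
  have hgint : Integrable (fun ω => I (X1 ω) / 2) μ := by
    have hgm0 : Measurable (fun ω => I (X1 ω) / 2) := (hIcont.measurable.comp hX1).div_const 2
    apply Integrable.mono' (integrable_const (1:ℝ)) hgm0.aestronglyMeasurable
    filter_upwards with ω
    have h0 : 0 ≤ I (X1 ω) := by
      apply intervalIntegral.integral_nonneg (by norm_num)
      intro u _
      exact F0 _
    have h2 : I (X1 ω) ≤ 2 := by
      calc I (X1 ω) ≤ ∫ u in (-1:ℝ)..1, (1:ℝ) := by
            apply intervalIntegral.integral_mono_on (by norm_num)
              ((contFsqrt Fξ hFcont _).intervalIntegrable _ _) intervalIntegrable_const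
            intro u _
            exact F1 _
      _ = 2 := by norm_num
    rw [Real.norm_eq_abs, abs_of_nonneg (by positivity)]
    linarith
  have conj2 : condExpGiven μ X1 Y =ᵐ[μ] fun ω => I (X1 ω) / 2 := by
    unfold condExpGiven
    symm
    apply ae_eq_condExp_of_forall_setIntegral_eq hle hYint
    · intro s _ _
      exact hgint.integrableOn
    · rintro s ⟨A, hA, rfl⟩ _
      exact hkey A hA
    · exact StronglyMeasurable.aestronglyMeasurable (hgm.stronglyMeasurable)
  -- a.e. X1 ∈ (0,1)
  have hX1ae : ∀ᵐ ω ∂μ, X1 ω ∈ Ioo (0:ℝ) 1 := by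
    have : μ (X1 ⁻¹' (Ioo (0:ℝ) 1)ᶜ) = 0 := by
      rw [← Measure.map_apply hX1 measurableSet_Ioo.compl, ← hν1, hlawX1]
      unfold uniformOnIoo
      rw [Measure.smul_apply, Measure.restrict_apply measurableSet_Ioo.compl]
      simp
    rw [ae_iff]
    convert this using 2
    rfl
  -- conjunct 3
  have conj3 : ∀ᵐ ω ∂μ, Real.sign (X1 ω) = Real.sign (condExpGiven μ X1 Y ω - τ) := by
    filter_upwards [hX1ae, conj2] with ω h01 heq
    rw [heq, Real.sign_of_pos h01.1, Real.sign_of_pos (by linarith [conj1' _ h01.1])]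
  -- conjunct 4
  have conj4 : 0 < μ {ω | 0 < X1 ω ∧ X1 ω + X2 ω < 0} := by
    have hsub : X1 ⁻¹' (Ioo 0 (1/2)) ∩ X2 ⁻¹' (Ioo (-1) (-1/2)) ⊆
        {ω | 0 < X1 ω ∧ X1 ω + X2 ω < 0} := by
      rintro ω ⟨⟨h1, h2⟩, ⟨h3, h4⟩⟩
      exact ⟨h1, by linarith⟩
    have hmul := hindep12.measure_inter_preimage_eq_mul (Ioo (0:ℝ) (1/2)) (Ioo (-1:ℝ) (-1/2)) measurableSet_Ioo measurableSet_Ioo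
    have h1 : μ (X1 ⁻¹' (Ioo 0 (1/2))) = ENNReal.ofReal (1/2) := by
      rw [← Measure.map_apply hX1 measurableSet_Ioo, ← hν1, hlawX1]
      unfold uniformOnIoo
      rw [Measure.smul_apply, Measure.restrict_apply measurableSet_Ioo]
      rw [Set.Ioo_inter_Ioo]
      norm_num [Real.volume_Ioo]
    have h2 : μ (X2 ⁻¹' (Ioo (-1) (-1/2))) = ENNReal.ofReal (1/4) := by
      rw [← Measure.map_apply hX2 measurableSet_Ioo, ← hν2, hlawX2]
      unfold uniformOnIoo
      rw [Measure.smul_apply, Measure.restrict_apply measurableSet_Ioo]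
      rw [Set.Ioo_inter_Ioo]
      norm_num [Real.volume_Ioo]
      have e1 : (2:ℝ≥0∞)⁻¹ = ENNReal.ofReal (1/2) := by
        rw [show (1/2:ℝ) = (2:ℝ)⁻¹ by norm_num, ENNReal.ofReal_inv_of_pos (by norm_num)]
        norm_num
      rw [e1, ← ENNReal.ofReal_mul (by norm_num)]
      norm_num
    calc (0:ℝ≥0∞) < ENNReal.ofReal (1/2) * ENNReal.ofReal (1/4) := by
          rw [← ENNReal.ofReal_mul (by norm_num)]
          norm_num
    _ = μ (X1 ⁻¹' (Ioo 0 (1/2)) ∩ X2 ⁻¹' (Ioo (-1) (-1/2))) := by rw [hmul, h1, h2]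
    _ ≤ _ := measure_mono hsub
  exact ⟨fun s hs => conj1 s hs, conj2, conj3, conj4⟩
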